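/- Let G be a finite simple graph, let H be a set of vertices of G, let c be a (1,1,0)-coloring of the induced subgraph G−H, and let v ∈ H. If either (i) v has exactly three neighbors in G−H, at least two of which are properly colored, or (ii) v has exactly four neighbors in G−H, all of which are properly colored, then c can be extended (keeping the colors of all vertices of G−H unchanged and assigning a color to v) to a (1,1,0)-coloring of the induced subgraph G−(H∖{v}). -/

import Mathlib

/-- A coloring `f` (with colors `0,1,2` standing for `1,2,3`) of the subgraph of `G`
induced on the set `s` is a partial coloring with deficiency vector `d` if every
vertex of `s` colored `i` has at most `d i` neighbors in `s` of the same color.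
With `d = ![1,1,0]` this is a `(1,1,0)`-coloring of the induced subgraph `G[s]`. -/
def IsPartialCol {V : Type*} (G : SimpleGraph V) (s : Set V) (d : Fin 3 → ℕ)
    (f : V → Fin 3) : Prop :=
  ∀ v ∈ s, {u | u ∈ s ∧ G.Adj v u ∧ f u = f v}.ncard ≤ d (f v)

/-- A vertex `v` is properly colored (relative to the colored set `s`) if no colored
neighbor of `v` has the same color as `v`. -/
def ProperlyCol {V : Type*} (G : SimpleGraph V) (s : Set V) (f : V → Fin 3)
    (v : V) : Prop :=
  ∀ u ∈ s, G.Adj v u → f u ≠ f v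

private lemma dval1 (i : Fin 3) (h : i ≠ 2) : (![1,1,0] : Fin 3 → ℕ) i = 1 := by
  fin_cases i <;> simp_all

/-- Let `H` be a set of vertices of a finite simple graph `G`, let `c` be a
`(1,1,0)`-coloring of `G − H`, and let `v ∈ H`.  If either (i) `v` has exactly three
neighbors in `G − H`, at least two of which are properly colored, or (ii) `v` has
exactly four neighbors in `G − H`, all properly colored, then `c` extends (keeping all
colors on `G − H` and coloring `v`) to a `(1,1,0)`-coloring of `G − (H \ {v})`. -/
theorem stmt1 {V : Type*} [Fintype V] (G : SimpleGraph V) (H : Set V)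
    (c : V → Fin 3) (hc : IsPartialCol G Hᶜ ![1, 1, 0] c)
    (v : V) (hv : v ∈ H)
    (hcase :
      ({u | u ∈ Hᶜ ∧ G.Adj v u}.ncard = 3 ∧
        ∃ a b, a ≠ b ∧ a ∈ Hᶜ ∧ G.Adj v a ∧ b ∈ Hᶜ ∧ G.Adj v b ∧
          ProperlyCol G Hᶜ c a ∧ ProperlyCol G Hᶜ c b) ∨
      ({u | u ∈ Hᶜ ∧ G.Adj v u}.ncard = 4 ∧
        ∀ u ∈ Hᶜ, G.Adj v u → ProperlyCol G Hᶜ c u)) :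
    ∃ c' : V → Fin 3,
      IsPartialCol G (Hᶜ ∪ {v}) ![1, 1, 0] c' ∧ ∀ u ∈ Hᶜ, c' u = c u := by
  classical
  set N : Set V := {u | u ∈ Hᶜ ∧ G.Adj v u} with hNdef
  have hvH : v ∉ Hᶜ := by simpa using hv
  have hfin : N.Finite := Set.toFinite N
  set Nf : Finset V := hfin.toFinset with hNfdef
  have hmem : ∀ u, u ∈ Nf ↔ u ∈ N := fun u => hfin.mem_toFinset
  have hNcard : N.ncard = Nf.card := Set.ncard_eq_toFinset_card N hfin
  have hfib : ∀ i : Fin 3, {u | u ∈ N ∧ c u = i}.ncard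
      = (Nf.filter (fun u => c u = i)).card := by
    intro i
    have h : {u | u ∈ N ∧ c u = i} = ↑(Nf.filter (fun u => c u = i)) := by
      ext u
      simp only [Set.mem_setOf_eq, Finset.coe_filter, hmem u]
    rw [h, Set.ncard_coe_finset]
  have hsum : Nf.card = ∑ i : Fin 3, (Nf.filter (fun u => c u = i)).card :=
    Finset.card_eq_sum_card_fiberwise (fun u _ => Finset.mem_univ (c u))
  rw [Fin.sum_univ_three] at hsum
  -- Key claim: there is a color `i` for `v` such that every neighbor of `v` colored `i`
  -- is properly colored, and the number of such neighbors is at most `d i`.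
  obtain ⟨i, hiprop, hicard⟩ :
      ∃ i : Fin 3, (∀ u ∈ N, c u = i → ProperlyCol G Hᶜ c u) ∧
        {u | u ∈ N ∧ c u = i}.ncard ≤ (![1,1,0] : Fin 3 → ℕ) i := by
    rcases hcase with ⟨h3, a, b, hab, haH, haAdj, hbH, hbAdj, hap, hbp⟩ | ⟨h4, hall⟩
    · have haN : a ∈ N := ⟨haH, haAdj⟩
      have hbN : b ∈ N := ⟨hbH, hbAdj⟩
      by_cases hex : ∃ j : Fin 3, ∀ u ∈ N, c u ≠ j
      · obtain ⟨j, hj⟩ := hex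
        refine ⟨j, fun u hu hcu => absurd hcu (hj u hu), ?_⟩
        have h : {u | u ∈ N ∧ c u = j} = ∅ := by
          ext u
          simp only [Set.mem_setOf_eq, Set.mem_empty_iff_false, iff_false, not_and]
          exact fun hu => hj u hu
        simp [h]
      · push_neg at hex
        have hcard3 : Nf.card = 3 := by rw [← hNcard]; exact h3
        have hpos : ∀ j : Fin 3, 1 ≤ (Nf.filter (fun u => c u = j)).card := by
          intro j
          obtain ⟨u, hu, hcu⟩ := hex j
          exact Finset.card_pos.mpr ⟨u, Finset.mem_filter.mpr ⟨(hmem u).mpr hu, hcu⟩⟩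
        have hone : ∀ j : Fin 3, (Nf.filter (fun u => c u = j)).card = 1 := by
          intro j
          have h0 := hpos 0
          have h1 := hpos 1
          have h2 := hpos 2
          have hj3 : j = 0 ∨ j = 1 ∨ j = 2 := by fin_cases j <;> simp
          rcases hj3 with rfl | rfl | rfl <;> omega
        have habc : c a ≠ c b := by
          intro h
          have h2 : 1 < (Nf.filter (fun u => c u = c a)).card :=
            Finset.one_lt_card.mpr
              ⟨a, Finset.mem_filter.mpr ⟨(hmem a).mpr haN, rfl⟩,
               b, Finset.mem_filter.mpr ⟨(hmem b).mpr hbN, h.symm⟩, hab⟩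
          rw [hone (c a)] at h2
          omega
        obtain ⟨x, hxN, hxp, hxne⟩ : ∃ x, x ∈ N ∧ ProperlyCol G Hᶜ c x ∧ c x ≠ 2 := by
          by_cases h2a : c a = 2
          · exact ⟨b, hbN, hbp, fun h => habc (h2a.trans h.symm)⟩
          · exact ⟨a, haN, hap, h2a⟩
        refine ⟨c x, ?_, ?_⟩
        · intro u huN hcu
          obtain ⟨y, hy⟩ := Finset.card_eq_one.mp (hone (c x))
          have hxy : x = y := by
            have hx' : x ∈ Nf.filter (fun u => c u = c x) :=
              Finset.mem_filter.mpr ⟨(hmem x).mpr hxN, rfl⟩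
            simpa [hy] using hx'
          have huy : u = y := by
            have hu' : u ∈ Nf.filter (fun u => c u = c x) :=
              Finset.mem_filter.mpr ⟨(hmem u).mpr huN, hcu⟩
            simpa [hy] using hu'
          rwa [huy, ← hxy]
        · rw [hfib, hone (c x), dval1 _ hxne]
    · have hcard4 : Nf.card = 4 := by rw [← hNcard]; exact h4
      have hprop : ∀ u ∈ N, ProperlyCol G Hᶜ c u := fun u hu => hall u hu.1 hu.2
      have hkey : ∃ i : Fin 3,
          (Nf.filter (fun u => c u = i)).card ≤ (![1,1,0] : Fin 3 → ℕ) i := by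
        by_contra hcon
        push_neg at hcon
        have h0 := hcon 0
        have h1 := hcon 1
        have h2 := hcon 2
        have e0 : (![1,1,0] : Fin 3 → ℕ) 0 = 1 := rfl
        have e1 : (![1,1,0] : Fin 3 → ℕ) 1 = 1 := rfl
        have e2 : (![1,1,0] : Fin 3 → ℕ) 2 = 0 := rfl
        rw [e0] at h0
        rw [e1] at h1
        rw [e2] at h2
        omega
      obtain ⟨i, hi⟩ := hkey
      exact ⟨i, fun u hu _ => hprop u hu, by rw [hfib]; exact hi⟩
  -- Extend the coloring by giving `v` the color `i`.
  have hne : ∀ w ∈ Hᶜ, Function.update c v i w = c w := fun w hw =>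
    Function.update_of_ne (by rintro rfl; exact hvH hw) _ _
  refine ⟨Function.update c v i, ?_, fun u hu => hne u hu⟩
  intro u hu
  rcases hu with hu | hu
  · -- `u` was already colored
    rw [hne u hu]
    by_cases hvS : G.Adj u v ∧ i = c u
    · -- `v` is a same-colored neighbor of `u`; then `u` is properly colored
      have huN : u ∈ N := ⟨hu, hvS.1.symm⟩
      have hupc : ProperlyCol G Hᶜ c u := hiprop u huN hvS.2.symm
      have hsub : {w | w ∈ Hᶜ ∪ {v} ∧ G.Adj u w ∧ Function.update c v i w = c u}
          ⊆ {v} := by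
        rintro w ⟨hw, hadj, hcw⟩
        rcases hw with hw | hw
        · exfalso
          rw [hne w hw] at hcw
          exact hupc w hw hadj hcw
        · exact hw
      have hle : {w | w ∈ Hᶜ ∪ {v} ∧ G.Adj u w ∧ Function.update c v i w = c u}.ncard
          ≤ 1 := by
        have := Set.ncard_le_ncard hsub (Set.finite_singleton v)
        simpa using this
      have h1d : 1 ≤ (![1,1,0] : Fin 3 → ℕ) (c u) := by
        rw [← hvS.2]
        have hp : 0 < {u' | u' ∈ N ∧ c u' = i}.ncard :=
          (Set.ncard_pos (Set.toFinite _)).mpr ⟨u, huN, hvS.2.symm⟩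
        omega
      exact le_trans hle h1d
    · -- `v` is not a same-colored neighbor of `u`: nothing changed for `u`
      have hSeq : {w | w ∈ Hᶜ ∪ {v} ∧ G.Adj u w ∧ Function.update c v i w = c u}
          = {w | w ∈ Hᶜ ∧ G.Adj u w ∧ c w = c u} := by
        ext w
        constructor
        · rintro ⟨hw, hadj, hcw⟩
          rcases hw with hw | hw
          · exact ⟨hw, hadj, by rwa [hne w hw] at hcw⟩
          · exfalso
            have hwv : w = v := hw
            subst hwv
            exact hvS ⟨hadj, by simpa using hcw⟩
        · rintro ⟨hw, hadj, hcw⟩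
          exact ⟨Or.inl hw, hadj, by rwa [hne w hw]⟩
      rw [hSeq]
      exact hc u hu
  · -- the new vertex `v`
    have huv : u = v := hu
    subst huv
    rw [Function.update_self]
    have hSeq : {w | w ∈ Hᶜ ∪ {u} ∧ G.Adj u w ∧ Function.update c u i w = i}
        = {w | w ∈ N ∧ c w = i} := by
      ext w
      constructor
      · rintro ⟨hw, hadj, hcw⟩
        rcases hw with hw | hw
        · exact ⟨⟨hw, hadj⟩, by rwa [hne w hw] at hcw⟩
        · exfalso
          have hwv : w = u := hw
          rw [hwv] at hadj
          exact G.loopless.irrefl u hadj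
      · rintro ⟨⟨hw, hadj⟩, hcw⟩
        exact ⟨Or.inl hw, hadj, by rwa [hne w hw]⟩
    rw [hSeq]
    exact hicard
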